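/- Let r, s, d > 0 and let Π₀(r,σ,d) = (∑_{k=0}^∞ r^k / ∏_{m=1}^{k} (σ + m·d))^{-1}. Then for every l ≥ 1, Π₀(r, s + l·d, d) > Π₀(r, s + (l−1)·d, d), and consequently the ratio Π₀(r,s,d) / ((s + l·d)·Π₀(r, s + l·d, d)) · s is strictly less than 1. -/

import Mathlib

open scoped BigOperators

/-- Term of the normalizing series of the birth-death queue:
`r^l / ∏_{m=1}^{l} (s + m·d)`, empty product = 1. -/
noncomputable def qterm (r s d : ℝ) (l : ℕ) : ℝ :=
  r ^ l / ∏ m ∈ Finset.Icc 1 l, (s + (m : ℝ) * d)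

/-- Stationary empty-queue probability `Π₀(r,s,d)`. -/
noncomputable def Pi0 (r s d : ℝ) : ℝ := (∑' l : ℕ, qterm r s d l)⁻¹

lemma qprod_pos {s d : ℝ} (hs : 0 < s) (hd : 0 < d) (k : ℕ) :
    0 < ∏ m ∈ Finset.Icc 1 k, (s + (m : ℝ) * d) := by
  apply Finset.prod_pos
  intro m hm
  have : (0:ℝ) ≤ (m:ℝ) * d := by positivity
  linarith

lemma qterm_pos {r s d : ℝ} (hr : 0 < r) (hs : 0 < s) (hd : 0 < d) (k : ℕ) :
    0 < qterm r s d k := div_pos (pow_pos hr k) (qprod_pos hs hd k)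

lemma qterm_le_aux {r s d : ℝ} (hr : 0 < r) (hs : 0 < s) (hd : 0 < d) (k : ℕ) :
    qterm r s d k ≤ (r / d) ^ k / (k.factorial : ℝ) := by
  have h1 : (∏ m ∈ Finset.Icc 1 k, ((m : ℝ) * d)) = (k.factorial : ℝ) * d ^ k := by
    rw [Finset.prod_mul_distrib, Finset.prod_const, Nat.card_Icc]
    rw [← Nat.cast_prod, ← Finset.Ico_add_one_right_eq_Icc, Finset.prod_Ico_id_eq_factorial]
    simp
  have h2 : (k.factorial : ℝ) * d ^ k ≤ ∏ m ∈ Finset.Icc 1 k, (s + (m : ℝ) * d) := by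
    rw [← h1]
    apply Finset.prod_le_prod
    · intro m hm; positivity
    · intro m hm; linarith
  have h3 : (0:ℝ) < (k.factorial : ℝ) * d ^ k := by positivity
  have : qterm r s d k ≤ r ^ k / ((k.factorial : ℝ) * d ^ k) := by
    unfold qterm
    exact div_le_div_of_nonneg_left (by positivity) h3 h2
  calc qterm r s d k ≤ r ^ k / ((k.factorial : ℝ) * d ^ k) := this
    _ = (r / d) ^ k / (k.factorial : ℝ) := by
        rw [div_pow]
        field_simp

lemma qterm_summable {r s d : ℝ} (hr : 0 < r) (hs : 0 < s) (hd : 0 < d) :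
    Summable (qterm r s d) :=
  Summable.of_nonneg_of_le (fun k => (qterm_pos hr hs hd k).le)
    (fun k => qterm_le_aux hr hs hd k) (Real.summable_pow_div_factorial (r / d))

lemma qterm_anti {r s s' d : ℝ} (hr : 0 < r) (hs : 0 < s) (hd : 0 < d)
    (hss : s ≤ s') (k : ℕ) : qterm r s' d k ≤ qterm r s d k := by
  unfold qterm
  apply div_le_div_of_nonneg_left (by positivity) (qprod_pos hs hd k)
  apply Finset.prod_le_prod
  · intro m hm
    have : (0:ℝ) ≤ (m:ℝ)*d := by positivity
    linarith
  · intro m hm; linarith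

lemma tsum_pos' {r s d : ℝ} (hr : 0 < r) (hs : 0 < s) (hd : 0 < d) :
    0 < ∑' l : ℕ, qterm r s d l :=
  Summable.tsum_pos (qterm_summable hr hs hd) (fun k => (qterm_pos hr hs hd k).le) 0
    (qterm_pos hr hs hd 0)

lemma tsum_lt' {r s s' d : ℝ} (hr : 0 < r) (hs : 0 < s) (hd : 0 < d)
    (hss : s < s') :
    (∑' l : ℕ, qterm r s' d l) < ∑' l : ℕ, qterm r s d l := by
  have hs' : 0 < s' := lt_trans hs hss
  have hterm : qterm r s' d 1 < qterm r s d 1 := by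
    unfold qterm
    simp only [Finset.Icc_self, Finset.prod_singleton, pow_one, Nat.cast_one, one_mul]
    apply div_lt_div_of_pos_left hr (by linarith)
    linarith
  exact Summable.tsum_lt_tsum (fun k => qterm_anti hr hs hd hss.le k) hterm
    (qterm_summable hr hs' hd) (qterm_summable hr hs hd)

theorem stmt9 (r s d : ℝ) (hr : 0 < r) (hs : 0 < s) (hd : 0 < d) :
    ∀ l : ℕ, 1 ≤ l →
      Pi0 r (s + (l : ℝ) * d) d > Pi0 r (s + ((l : ℝ) - 1) * d) d ∧
      s * Pi0 r s d / ((s + (l : ℝ) * d) * Pi0 r (s + (l : ℝ) * d) d) < 1 := by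
  intro l hl
  have hl1 : (1:ℝ) ≤ (l:ℝ) := by exact_mod_cast hl
  have hσ : 0 < s + ((l : ℝ) - 1) * d := by nlinarith
  have hσ' : 0 < s + (l : ℝ) * d := by nlinarith
  have hlt : s + ((l : ℝ) - 1) * d < s + (l : ℝ) * d := by nlinarith
  set A := ∑' k : ℕ, qterm r s d k with hA
  set B := ∑' k : ℕ, qterm r (s + (l : ℝ) * d) d k with hB
  set C := ∑' k : ℕ, qterm r (s + ((l : ℝ) - 1) * d) d k with hC
  have hApos : 0 < A := tsum_pos' hr hs hd
  have hBpos : 0 < B := tsum_pos' hr hσ' hd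
  have hCpos : 0 < C := tsum_pos' hr hσ hd
  have hBC : B < C := tsum_lt' hr hσ hd hlt
  have hBA : B < A := tsum_lt' hr hs hd (by nlinarith)
  constructor
  · show Pi0 r (s + ((l : ℝ) - 1) * d) d < Pi0 r (s + (l : ℝ) * d) d
    unfold Pi0
    rw [← hB, ← hC]
    exact inv_strictAnti₀ hBpos hBC
  · unfold Pi0
    rw [← hA, ← hB]
    rw [div_lt_one (by positivity)]
    have h1 : s * B < s * A := by nlinarith
    have h2 : 0 < (l:ℝ) * d * A := mul_pos (by nlinarith) hApos
    have key : s * B < (s + (l:ℝ) * d) * A := by nlinarith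
    calc s * A⁻¹ = s / A := by rw [div_eq_mul_inv]
      _ < (s + (l:ℝ) * d) * B⁻¹ := by
          rw [div_lt_iff₀ hApos]
          calc s = s * B * B⁻¹ := by field_simp
            _ < (s + (l:ℝ)*d) * A * B⁻¹ := by
                apply mul_lt_mul_of_pos_right key (by positivity)
            _ = (s + (l:ℝ)*d) * B⁻¹ * A := by ring
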